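/- Let X be a Z²-subshift of finite type which is f-block gluing for a nondecreasing function f : ℕ → ℕ satisfying f(n) ∈ o(log n) (for every ε > 0 there is n₀ such that f(n) ≤ ε·log n for all n ≥ n₀) and f(n) ≤ n for all n. Then the set of doubly periodic configurations of X is dense in X. -/

import Mathlib

open Filter

abbrev Config (A : Type*) := ℤ × ℤ → A

def shiftC {A : Type*} (u : ℤ × ℤ) (x : Config A) : Config A := fun v => x (v + u)

def blockAt {A : Type*} (x : Config A) (u : ℤ × ℤ) (n : ℕ) : Fin n × Fin n → A :=
  fun v => x (u + (((v.1 : ℕ) : ℤ), ((v.2 : ℕ) : ℤ)))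

def IsSFT {A : Type*} (X : Set (Config A)) : Prop :=
  ∃ (r : ℕ) (F : Set (Fin r × Fin r → A)),
    X = {x : Config A | ∀ u : ℤ × ℤ, blockAt x u r ∉ F}

def Lang {A : Type*} (X : Set (Config A)) (n : ℕ) : Set (Fin n × Fin n → A) :=
  {p | ∃ x ∈ X, ∃ u : ℤ × ℤ, blockAt x u n = p}

def gluingSet {A : Type*} (X : Set (Config A)) {n : ℕ}
    (p q : Fin n × Fin n → A) : Set (ℤ × ℤ) :=
  {u | ∃ x ∈ X, blockAt x 0 n = q ∧ blockAt x u n = p}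

def normInf (u : ℤ × ℤ) : ℤ := max |u.1| |u.2|

def BlockGluing {A : Type*} (X : Set (Config A)) (f : ℕ → ℕ) : Prop :=
  ∀ n : ℕ, 1 ≤ n → ∀ p ∈ Lang X n, ∀ q ∈ Lang X n, ∀ u : ℤ × ℤ,
    (f n : ℤ) + (n : ℤ) ≤ normInf u → u ∈ gluingSet X p q

def DoublyPeriodic {A : Type*} (x : Config A) : Prop :=
  ∃ m : ℤ, 0 < m ∧ ∃ k : ℤ, 0 < k ∧ shiftC (m, 0) x = x ∧ shiftC (0, k) x = x

private lemma blockAt_pt {A : Type*} {z z' : Config A} {u u' : ℤ × ℤ} {n : ℕ}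
    (h : blockAt z u n = blockAt z' u' n) {c d : ℕ} (hc : c < n) (hd : d < n) :
    z (u.1 + (c : ℤ), u.2 + (d : ℤ)) = z' (u'.1 + (c : ℤ), u'.2 + (d : ℤ)) := by
  have h2 := congrFun h (⟨c, hc⟩, ⟨d, hd⟩)
  simp only [blockAt] at h2
  have e1 : u + (((c : ℕ) : ℤ), ((d : ℕ) : ℤ)) = (u.1 + (c : ℤ), u.2 + (d : ℤ)) := by
    ext <;> simp
  have e2 : u' + (((c : ℕ) : ℤ), ((d : ℕ) : ℤ)) = (u'.1 + (c : ℤ), u'.2 + (d : ℤ)) := by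
    ext <;> simp
  rwa [e1, e2] at h2

private lemma blockAt_pt2 {A : Type*} {z z' : Config A} {u1 u2 u1' u2' : ℤ} {n : ℕ}
    (h : blockAt z (u1, u2) n = blockAt z' (u1', u2') n) (c d : ℕ) (hc : c < n) (hd : d < n)
    {a1 a2 b1 b2 : ℤ} (e1 : a1 = u1 + c) (e2 : a2 = u2 + d)
    (e3 : b1 = u1' + c) (e4 : b2 = u2' + d) :
    z (a1, a2) = z' (b1, b2) := by
  subst e1; subst e2; subst e3; subst e4
  exact blockAt_pt h hc hd

private lemma shiftC_shiftC {A : Type*} (u w : ℤ × ℤ) (z : Config A) :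
    shiftC u (shiftC w z) = shiftC w (shiftC u z) := by
  funext v
  simp only [shiftC]
  congr 1
  abel

private lemma dp_shiftC {A : Type*} {z : Config A} (h : DoublyPeriodic z) (w : ℤ × ℤ) :
    DoublyPeriodic (shiftC w z) := by
  obtain ⟨m, hm, k, hk, h1, h2⟩ := h
  exact ⟨m, hm, k, hk, by rw [shiftC_shiftC, h1], by rw [shiftC_shiftC, h2]⟩

private theorem main_dense {A : Type} [Fintype A]
    (X : Set (Config A)) (rz : ℕ) (F : Set (Fin rz × Fin rz → A))
    (hF : X = {x : Config A | ∀ u : ℤ × ℤ, blockAt x u rz ∉ F})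
    (f : ℕ → ℕ)
    (hlog : ∀ ε : ℝ, 0 < ε → ∃ n₀ : ℕ, ∀ n : ℕ, n₀ ≤ n → (f n : ℝ) ≤ ε * Real.log n)
    (hid : ∀ n : ℕ, f n ≤ n)
    (hbg : BlockGluing X f)
    (x : Config A) (hx : x ∈ X) (L : ℕ) :
    ∃ y ∈ X, DoublyPeriodic y ∧ ∀ v : ℤ × ℤ, v.1.natAbs ≤ L → v.2.natAbs ≤ L → y v = x v := by
  classical
  haveI : Nonempty A := ⟨x (0, 0)⟩
  set a : ℕ := Fintype.card A with ha_def
  have ha1 : 1 ≤ a := Fintype.card_pos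
  set r : ℕ := max rz 1 with hr_def
  have hrz_r : rz ≤ r := le_max_left _ _
  have hr1 : 1 ≤ r := le_max_right _ _
  -- choice of epsilon
  set c : ℝ := (r : ℝ) * Real.log a with hc_def
  have hc0 : 0 ≤ c := mul_nonneg (by positivity) (Real.log_nonneg (by exact_mod_cast ha1))
  have hlog2 : (0:ℝ) < Real.log 2 := Real.log_pos one_lt_two
  have hlog3 : (0:ℝ) < Real.log 3 := Real.log_pos (by norm_num)
  have hden : (0:ℝ) < 2 * (c + 1) * (Real.log 3 + 1) := by nlinarith
  set ε : ℝ := Real.log 2 / (2 * (c + 1) * (Real.log 3 + 1)) with hε_def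
  have hεpos : 0 < ε := div_pos hlog2 hden
  obtain ⟨n₀, hn₀⟩ := hlog ε hεpos
  set M : ℕ := max (max (2 * L + 1) r) (max n₀ 1) with hM_def
  have hM1 : 1 ≤ M := le_trans (le_max_right n₀ 1) (le_max_right _ _)
  have hMr : r ≤ M := le_trans (le_max_right _ _) (le_max_left _ _)
  have hML : 2 * L + 1 ≤ M := le_trans (le_max_left _ _) (le_max_left _ _)
  have hMn₀ : n₀ ≤ M := le_trans (le_max_left n₀ 1) (le_max_right _ _)
  set K : ℕ := Nat.ceil (Real.log M) + 1 with hK_def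
  set P : ℕ → ℕ → A := fun i d => x (-(L:ℤ) + i, -(L:ℤ) + d) with hP_def
  -- shift invariance of X
  have hshift : ∀ (z : Config A), z ∈ X → ∀ w, shiftC w z ∈ X := by
    intro z hz w
    rw [hF] at hz ⊢
    intro u
    have hbz : blockAt (shiftC w z) u rz = blockAt z (u + w) rz := by
      funext v
      simp only [blockAt, shiftC]
      congr 1
      abel
    rw [hbz]
    exact hz _
  -- the tower of rows of copies of the basic pattern
  have tower : ∀ k : ℕ, ∃ (m : ℕ) (zc : Config A) (T : Finset ℕ),
      zc ∈ X ∧ M ≤ m ∧ m ≤ M * 3 ^ k ∧ T.card = 2 ^ k ∧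
      (∀ t ∈ T, t + M ≤ m) ∧
      (∀ t₁ ∈ T, ∀ t₂ ∈ T, t₁ < t₂ → t₁ + M ≤ t₂) ∧
      (∀ t ∈ T, ∀ i d : ℕ, i < M → d < M → zc ((t : ℤ) + i, (d : ℤ)) = P i d) := by
    intro k
    induction k with
    | zero =>
      refine ⟨M, shiftC (-(L:ℤ), -(L:ℤ)) x, {0}, hshift x hx _, le_refl M,
        by simpa using le_refl M, by simp, ?_, ?_, ?_⟩
      · intro t ht
        simp only [Finset.mem_singleton] at ht
        omega
      · intro t₁ h1 t₂ h2 h12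
        simp only [Finset.mem_singleton] at h1 h2
        omega
      · intro t ht i d hi hd
        simp only [Finset.mem_singleton] at ht
        subst ht
        simp only [shiftC, hP_def]
        congr 1
        simp only [Prod.mk_add_mk, Prod.mk.injEq]
        constructor <;> ring
    | succ k ih =>
      obtain ⟨m, zc, T, hzcX, hMm, hmle, hTcard, hTin, hTgap, hTcopy⟩ := ih
      have h1m : 1 ≤ m := le_trans hM1 hMm
      have hnorm : (f m : ℤ) + (m : ℤ) ≤ normInf (((m + f m : ℕ) : ℤ), (0 : ℤ)) := by
        simp only [normInf]
        have h1 : |((m + f m : ℕ) : ℤ)| = ((m + f m : ℕ) : ℤ) := abs_of_nonneg (by positivity)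
        rw [h1]
        have h2 : ((f m : ℤ) + (m : ℤ)) ≤ ((m + f m : ℕ) : ℤ) := by push_cast; ring_nf; omega
        exact le_trans h2 (le_max_left _ _)
      obtain ⟨z', hz'X, hq, hp⟩ :=
        hbg m h1m (blockAt zc 0 m) ⟨zc, hzcX, 0, rfl⟩ (blockAt zc 0 m) ⟨zc, hzcX, 0, rfl⟩
          (((m + f m : ℕ) : ℤ), 0) hnorm
      have hq0 : blockAt z' ((0:ℤ), (0:ℤ)) m = blockAt zc ((0:ℤ), (0:ℤ)) m := by
        rw [Prod.mk_zero_zero]; exact hq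
      have hp0 : blockAt z' (((m + f m : ℕ) : ℤ), (0:ℤ)) m = blockAt zc ((0:ℤ), (0:ℤ)) m := by
        rw [Prod.mk_zero_zero]; exact hp
      have hdisj : Disjoint T (T.image (fun t => t + (m + f m))) := by
        rw [Finset.disjoint_left]
        intro s hs hs'
        obtain ⟨t, ht, rfl⟩ := Finset.mem_image.mp hs'
        have h1 := hTin _ hs
        omega
      refine ⟨2 * m + f m, z', T ∪ T.image (fun t => t + (m + f m)), hz'X,
        by omega, ?_, ?_, ?_, ?_, ?_⟩
      · have h1 := hid m
        calc 2 * m + f m ≤ 3 * m := by omega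
        _ ≤ 3 * (M * 3 ^ k) := by omega
        _ = M * 3 ^ (k + 1) := by ring
      · rw [Finset.card_union_of_disjoint hdisj,
          Finset.card_image_of_injective _ (add_left_injective _), hTcard, pow_succ]
        ring
      · intro t ht
        rcases Finset.mem_union.mp ht with h | h
        · have := hTin t h; omega
        · obtain ⟨s, hs, rfl⟩ := Finset.mem_image.mp h
          have := hTin s hs; omega
      · intro t₁ h1 t₂ h2 h12
        rcases Finset.mem_union.mp h1 with ha | ha <;> rcases Finset.mem_union.mp h2 with hb | hb
        · exact hTgap _ ha _ hb h12
        · obtain ⟨s, hs, rfl⟩ := Finset.mem_image.mp hb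
          have := hTin _ ha; omega
        · obtain ⟨s, hs, rfl⟩ := Finset.mem_image.mp ha
          have := hTin _ hb; omega
        · obtain ⟨s₁, hs₁, rfl⟩ := Finset.mem_image.mp ha
          obtain ⟨s₂, hs₂, rfl⟩ := Finset.mem_image.mp hb
          have := hTgap _ hs₁ _ hs₂ (by omega); omega
      · intro t ht i d hi hd
        have hdm : d < m := by omega
        rcases Finset.mem_union.mp ht with h | h
        · have hc2 : t + i < m := by have := hTin _ h; omega
          have h2 : z' ((t:ℤ) + i, (d:ℤ)) = zc ((t:ℤ) + i, (d:ℤ)) :=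
            blockAt_pt2 hq0 (t + i) d hc2 hdm (by push_cast; ring) (by push_cast; ring)
              (by push_cast; ring) (by push_cast; ring)
          rw [h2]
          exact hTcopy _ h i d hi hd
        · obtain ⟨s, hs, rfl⟩ := Finset.mem_image.mp h
          have hc2 : s + i < m := by have := hTin _ hs; omega
          have h2 : z' (((s + (m + f m) : ℕ):ℤ) + i, (d:ℤ)) = zc ((s:ℤ) + i, (d:ℤ)) :=
            blockAt_pt2 hp0 (s + i) d hc2 hdm (by push_cast; ring) (by push_cast; ring)
              (by push_cast; ring) (by push_cast; ring)
          rw [h2]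
          exact hTcopy _ hs i d hi hd
  -- instantiate the tower
  obtain ⟨W, zc, T, hzcX, hMW, hWle, hTcard, hTin, hTgap, hTcopy⟩ := tower K
  have hW1 : 1 ≤ W := le_trans hM1 hMW
  set g₂ : ℕ := f W with hg₂_def
  -- the counting estimate
  have hcount : a ^ (r * g₂) < 2 ^ K := by
    have hWposR : (0:ℝ) < (W:ℝ) := by exact_mod_cast hW1
    have hMposR : (0:ℝ) < (M:ℝ) := by exact_mod_cast hM1
    have hfW : (f W : ℝ) ≤ ε * Real.log W := hn₀ W (le_trans hMn₀ hMW)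
    have hlogM0 : (0:ℝ) ≤ Real.log M := Real.log_nonneg (by exact_mod_cast hM1)
    have hlogW : Real.log W ≤ Real.log M + K * Real.log 3 := by
      have h1 : (W:ℝ) ≤ (M:ℝ) * 3 ^ K := by exact_mod_cast hWle
      have h2 : Real.log W ≤ Real.log ((M:ℝ) * 3 ^ K) := Real.log_le_log hWposR h1
      rwa [Real.log_mul (ne_of_gt hMposR) (by positivity), Real.log_pow] at h2
    have hK1 : (1:ℝ) ≤ (K:ℝ) := by
      have h1 : 1 ≤ K := by rw [hK_def]; omega
      exact_mod_cast h1
    have hKM : Real.log (M:ℝ) < (K:ℝ) := by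
      have h1 := Nat.le_ceil (Real.log (M:ℝ))
      have h2 : ((Nat.ceil (Real.log (M:ℝ)) : ℕ) : ℝ) < (K:ℝ) := by
        have h3 : (Nat.ceil (Real.log (M:ℝ))) < K := by rw [hK_def]; omega
        exact_mod_cast h3
      linarith
    have hε_eq : ε * (2 * (c + 1) * (Real.log 3 + 1)) = Real.log 2 := by
      rw [hε_def]; field_simp
    have hmain : ((r * g₂ : ℕ) : ℝ) * Real.log a < (K : ℝ) * Real.log 2 := by
      have s1 : c * (f W : ℝ) ≤ c * (ε * Real.log W) := mul_le_mul_of_nonneg_left hfW hc0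
      have hce : (0:ℝ) ≤ c * ε := mul_nonneg hc0 hεpos.le
      have s2 : c * ε * Real.log W ≤ c * ε * (Real.log M + K * Real.log 3) :=
        mul_le_mul_of_nonneg_left hlogW hce
      have h0 : c * (Real.log M + (K:ℝ) * Real.log 3)
          < (K:ℝ) * (2 * (c + 1) * (Real.log 3 + 1)) := by
        have hcM : c * Real.log M ≤ c * (K:ℝ) := mul_le_mul_of_nonneg_left hKM.le hc0
        nlinarith [mul_nonneg hc0 (le_trans zero_le_one hK1), hlog3, hK1,
          mul_pos (show (0:ℝ) < (K:ℝ) by linarith) hlog3,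
          mul_nonneg (mul_nonneg hc0 (le_trans zero_le_one hK1)) hlog3.le]
      have s3 : c * ε * (Real.log M + (K:ℝ) * Real.log 3) < (K:ℝ) * Real.log 2 := by
        calc c * ε * (Real.log M + (K:ℝ) * Real.log 3)
            = ε * (c * (Real.log M + (K:ℝ) * Real.log 3)) := by ring
          _ < ε * ((K:ℝ) * (2 * (c + 1) * (Real.log 3 + 1))) :=
              mul_lt_mul_of_pos_left h0 hεpos
          _ = (K:ℝ) * (ε * (2 * (c + 1) * (Real.log 3 + 1))) := by ring
          _ = (K:ℝ) * Real.log 2 := by rw [hε_eq]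
      have e0 : ((r * g₂ : ℕ) : ℝ) * Real.log a = c * (f W : ℝ) := by
        rw [hc_def, hg₂_def]; push_cast; ring
      calc ((r * g₂ : ℕ) : ℝ) * Real.log a = c * (f W : ℝ) := e0
        _ ≤ c * (ε * Real.log W) := s1
        _ = c * ε * Real.log W := by ring
        _ ≤ c * ε * (Real.log M + K * Real.log 3) := s2
        _ < (K:ℝ) * Real.log 2 := s3
    rcases eq_or_lt_of_le ha1 with h1 | h2
    · rw [← h1]
      have hK0 : K ≠ 0 := by rw [hK_def]; omega
      simpa using Nat.one_lt_two_pow hK0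
    · have hlt : ((a:ℝ)) ^ (r * g₂) < (2:ℝ) ^ K := by
        have hlog_lt : Real.log ((a:ℝ) ^ (r * g₂)) < Real.log ((2:ℝ) ^ K) := by
          rw [Real.log_pow, Real.log_pow]
          exact hmain
        have hp1 : (0:ℝ) < (a:ℝ) ^ (r * g₂) := by positivity
        have hp2 : (0:ℝ) < (2:ℝ) ^ K := by positivity
        rw [← Real.exp_log hp1, ← Real.exp_log hp2]
        exact Real.exp_lt_exp.mpr hlog_lt
      exact_mod_cast hlt
  -- the final gluing : a row strip above the same row strip, with small vertical gap
  have hnorm2 : (f W : ℤ) + (W : ℤ) ≤ normInf ((0 : ℤ), ((W + g₂ : ℕ) : ℤ)) := by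
    simp only [normInf]
    have h1 : |((W + g₂ : ℕ) : ℤ)| = ((W + g₂ : ℕ) : ℤ) := abs_of_nonneg (by positivity)
    rw [h1]
    have h2 : ((f W : ℤ) + (W : ℤ)) ≤ ((W + g₂ : ℕ) : ℤ) := by
      rw [hg₂_def]; push_cast; ring_nf; omega
    exact le_trans h2 (le_max_right _ _)
  obtain ⟨x'', hx''X, hbotB, htopB⟩ :=
    hbg W hW1 (blockAt zc 0 W) ⟨zc, hzcX, 0, rfl⟩
      (blockAt zc ((0:ℤ), (M:ℤ) - (W:ℤ)) W) ⟨zc, hzcX, _, rfl⟩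
      ((0 : ℤ), ((W + g₂ : ℕ) : ℤ)) hnorm2
  have hbotB0 : blockAt x'' ((0:ℤ), (0:ℤ)) W = blockAt zc ((0:ℤ), (M:ℤ) - (W:ℤ)) W := by
    rw [Prod.mk_zero_zero]; exact hbotB
  have Hbot : ∀ cc dd : ℕ, cc < W → dd < W →
      x'' ((cc:ℤ), (dd:ℤ)) = zc ((cc:ℤ), (M:ℤ) - W + dd) := by
    intro cc dd h1 h2
    exact blockAt_pt2 hbotB0 cc dd h1 h2 (by push_cast; ring) (by push_cast; ring)
      (by push_cast; ring) (by push_cast; ring)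
  have Htop : ∀ cc dd : ℕ, cc < W → dd < W →
      x'' ((cc:ℤ), (W:ℤ) + (g₂:ℤ) + dd) = zc ((cc:ℤ), (dd:ℤ)) := by
    intro cc dd h1 h2
    have htopB0 : blockAt x'' ((0:ℤ), ((W + g₂ : ℕ) : ℤ)) W = blockAt zc ((0:ℤ), (0:ℤ)) W := by
      rw [Prod.mk_zero_zero]; exact htopB
    exact blockAt_pt2 htopB0 cc dd h1 h2 (by push_cast; ring) (by push_cast; ring)
      (by push_cast; ring) (by push_cast; ring)
  -- copies in the bottom band and the top band
  have bottomCopy : ∀ t ∈ T, ∀ i d : ℕ, i < M → d < M →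
      x'' ((t:ℤ) + i, (W:ℤ) - M + d) = P i d := by
    intro t ht i d hi hd
    have hcW : t + i < W := by have := hTin t ht; omega
    have hdW : W - M + d < W := by omega
    have h := Hbot (t + i) (W - M + d) hcW hdW
    have e1 : ((t + i : ℕ) : ℤ) = (t:ℤ) + i := by push_cast; ring
    have e2 : ((W - M + d : ℕ) : ℤ) = (W:ℤ) - M + d := by
      have : M ≤ W := hMW
      push_cast [this]
      ring
    rw [e1, e2] at h
    have e3 : (M:ℤ) - W + ((W:ℤ) - M + d) = (d:ℤ) := by ring
    rw [e3] at h
    rw [h]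
    exact hTcopy t ht i d hi hd
  have topCopy : ∀ t ∈ T, ∀ i d : ℕ, i < M → d < M →
      x'' ((t:ℤ) + i, (W:ℤ) + g₂ + d) = P i d := by
    intro t ht i d hi hd
    have hcW : t + i < W := by have := hTin t ht; omega
    have h := Htop (t + i) d hcW (lt_of_lt_of_le hd hMW)
    have e1 : ((t + i : ℕ) : ℤ) = (t:ℤ) + i := by push_cast; ring
    rw [e1] at h
    rw [h]
    exact hTcopy t ht i d hi hd
  -- the vertical seam
  have SV : ∀ z₁ : ℤ, 0 ≤ z₁ → z₁ < W → ∀ e : ℤ, (W:ℤ) - M ≤ e → e < W →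
      x'' (z₁, e) = x'' (z₁, e + ((M:ℤ) + g₂)) := by
    intro z₁ h1 h2 e h3 h4
    set cc := z₁.toNat with hcc_def
    have hz₁ : (cc:ℤ) = z₁ := Int.toNat_of_nonneg h1
    have hccW : cc < W := by omega
    set d := (e - ((W:ℤ) - M)).toNat with hd_def
    have hdv : (d:ℤ) = e - ((W:ℤ) - M) := Int.toNat_of_nonneg (by omega)
    have hdM : d < M := by omega
    have h5 := Hbot cc (W - M + d) hccW (by omega)
    have h6 := Htop cc d hccW (by omega)
    have e5 : ((W - M + d : ℕ) : ℤ) = e := by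
      have : M ≤ W := hMW
      push_cast [this]
      omega
    rw [e5] at h5
    have e52 : (M:ℤ) - W + e = (d:ℤ) := by omega
    rw [e52] at h5
    have e6 : (W:ℤ) + (g₂:ℤ) + d = e + ((M:ℤ) + g₂) := by omega
    rw [e6] at h6
    rw [hz₁] at h5 h6
    rw [h5, ← h6]
  -- pigeonhole: choose two copies with matching gap content
  have hcardlt : Fintype.card (Fin r × Fin g₂ → A) < Fintype.card {t // t ∈ T} := by
    rw [Fintype.card_coe, hTcard, Fintype.card_fun]
    simpa using hcount
  obtain ⟨s₁, s₂, hne, hGeq0⟩ :=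
    Fintype.exists_ne_map_eq_of_card_lt
      (fun (t : {t // t ∈ T}) => fun (p : Fin r × Fin g₂) =>
        x'' (((t : ℕ) : ℤ) + ((p.1 : ℕ) : ℤ), (W : ℤ) + ((p.2 : ℕ) : ℤ))) hcardlt
  obtain ⟨τ, τ', hτT, hτ'T, hττ', hGeq⟩ :
      ∃ τ τ', τ ∈ T ∧ τ' ∈ T ∧ τ < τ' ∧
        ∀ i b : ℕ, i < r → b < g₂ →
          x'' ((τ:ℤ) + i, (W:ℤ) + b) = x'' ((τ':ℤ) + i, (W:ℤ) + b) := by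
    rcases lt_trichotomy (s₁ : ℕ) (s₂ : ℕ) with h | h | h
    · exact ⟨s₁, s₂, s₁.2, s₂.2, h, fun i b hi hb => congrFun hGeq0 (⟨i, hi⟩, ⟨b, hb⟩)⟩
    · exact absurd (Subtype.ext h) hne
    · exact ⟨s₂, s₁, s₂.2, s₁.2, h, fun i b hi hb => (congrFun hGeq0 (⟨i, hi⟩, ⟨b, hb⟩)).symm⟩
  -- the horizontal seam
  have hτ'W : τ' + M ≤ W := hTin τ' hτ'T
  have hτM : τ + M ≤ τ' := hTgap τ hτT τ' hτ'T hττ'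
  have SH : ∀ i : ℕ, i < r → ∀ e : ℤ, (W:ℤ) - M ≤ e → e < (W:ℤ) + g₂ + r →
      x'' ((τ:ℤ) + i, e) = x'' ((τ':ℤ) + i, e) := by
    intro i hi e h1 h2
    have hiM : i < M := lt_of_lt_of_le hi hMr
    rcases lt_or_ge e (W:ℤ) with he | he
    · set d := (e - ((W:ℤ) - M)).toNat with hd_def
      have hdv : (d:ℤ) = e - ((W:ℤ) - M) := Int.toNat_of_nonneg (by omega)
      have hdM : d < M := by omega
      have e1 : e = (W:ℤ) - M + d := by omega
      rw [e1, bottomCopy τ hτT i d hiM hdM, bottomCopy τ' hτ'T i d hiM hdM]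
    · rcases lt_or_ge e ((W:ℤ) + g₂) with he2 | he2
      · set b := (e - (W:ℤ)).toNat with hb_def
        have hbv : (b:ℤ) = e - W := Int.toNat_of_nonneg (by omega)
        have hbg₂ : b < g₂ := by omega
        have e1 : e = (W:ℤ) + b := by omega
        rw [e1]
        exact hGeq i b hi hbg₂
      · set d := (e - ((W:ℤ) + g₂)).toNat with hd_def
        have hdv : (d:ℤ) = e - ((W:ℤ) + g₂) := Int.toNat_of_nonneg (by omega)
        have hdM : d < M := by omega
        have e1 : e = (W:ℤ) + g₂ + d := by omega
        rw [e1, topCopy τ hτT i d hiM hdM, topCopy τ' hτ'T i d hiM hdM]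
  -- the periods
  set T₁ : ℤ := (τ' : ℤ) - (τ : ℤ) with hT₁_def
  have hT₁pos : 0 < T₁ := by omega
  have hT₁M : (M:ℤ) ≤ T₁ := by omega
  set T₂ : ℤ := (M:ℤ) + g₂ with hT₂_def
  have hT₂pos : 0 < T₂ := by omega
  have hrT₁ : (r:ℤ) ≤ T₁ := by omega
  have hrT₂ : (r:ℤ) ≤ T₂ := by omega
  set β : ℤ := (W:ℤ) - M with hβ_def
  have hβ0 : 0 ≤ β := by omega
  -- the folding maps
  set ρ1 : ℤ → ℤ := fun s => (τ:ℤ) + (s - τ) % T₁ with hρ1_def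
  set ρ2 : ℤ → ℤ := fun s => β + (s - β) % T₂ with hρ2_def
  have hρ1_lb : ∀ s, (τ:ℤ) ≤ ρ1 s := fun s =>
    le_add_of_nonneg_right (Int.emod_nonneg _ (ne_of_gt hT₁pos))
  have hρ1_ub : ∀ s, ρ1 s < (τ:ℤ) + T₁ := fun s =>
    add_lt_add_right (Int.emod_lt_of_pos _ hT₁pos) _
  have hρ2_lb : ∀ s, β ≤ ρ2 s := fun s =>
    le_add_of_nonneg_right (Int.emod_nonneg _ (ne_of_gt hT₂pos))
  have hρ2_ub : ∀ s, ρ2 s < β + T₂ := fun s =>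
    add_lt_add_right (Int.emod_lt_of_pos _ hT₂pos) _
  have hρ1_fix : ∀ s, (τ:ℤ) ≤ s → s < (τ:ℤ) + T₁ → ρ1 s = s := by
    intro s h1 h2
    simp only [hρ1_def]
    rw [Int.emod_eq_of_lt (by omega) (by omega)]
    ring
  have hρ2_fix : ∀ s, β ≤ s → s < β + T₂ → ρ2 s = s := by
    intro s h1 h2
    simp only [hρ2_def]
    rw [Int.emod_eq_of_lt (by omega) (by omega)]
    ring
  have hρ1_wrap : ∀ s, (τ:ℤ) + T₁ ≤ s → s < (τ:ℤ) + T₁ + T₁ → ρ1 s = s - T₁ := by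
    intro s h1 h2
    simp only [hρ1_def]
    rw [show s - (τ:ℤ) = (s - τ - T₁) + T₁ * 1 by ring, Int.add_mul_emod_self_left,
      Int.emod_eq_of_lt (by omega) (by omega)]
    ring
  have hρ2_wrap : ∀ s, β + T₂ ≤ s → s < β + T₂ + T₂ → ρ2 s = s - T₂ := by
    intro s h1 h2
    simp only [hρ2_def]
    rw [show s - β = (s - β - T₂) + T₂ * 1 by ring, Int.add_mul_emod_self_left,
      Int.emod_eq_of_lt (by omega) (by omega)]
    ring
  have hρ1_add : ∀ s i : ℤ, ρ1 (ρ1 s + i) = ρ1 (s + i) := by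
    intro s i
    simp only [hρ1_def]
    congr 1
    rw [show (τ:ℤ) + (s - τ) % T₁ + i - τ = (s - τ) % T₁ + i by ring,
      Int.add_emod, Int.emod_emod_of_dvd _ dvd_rfl, ← Int.add_emod]
    congr 1
    ring
  have hρ2_add : ∀ s i : ℤ, ρ2 (ρ2 s + i) = ρ2 (s + i) := by
    intro s i
    simp only [hρ2_def]
    congr 1
    rw [show β + (s - β) % T₂ + i - β = (s - β) % T₂ + i by ring,
      Int.add_emod, Int.emod_emod_of_dvd _ dvd_rfl, ← Int.add_emod]
    congr 1
    ring
  have hρ1_shift : ∀ s, ρ1 (s + T₁) = ρ1 s := by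
    intro s
    simp only [hρ1_def]
    congr 1
    rw [show s + T₁ - (τ:ℤ) = (s - τ) + T₁ * 1 by ring, Int.add_mul_emod_self_left]
  have hρ2_shift : ∀ s, ρ2 (s + T₂) = ρ2 s := by
    intro s
    simp only [hρ2_def]
    congr 1
    rw [show s + T₂ - β = (s - β) + T₂ * 1 by ring, Int.add_mul_emod_self_left]
  -- the key local equality
  have key : ∀ z₁ z₂ : ℤ, (τ:ℤ) ≤ z₁ → z₁ < (τ:ℤ) + T₁ + r → β ≤ z₂ → z₂ < β + T₂ + r →
      x'' (ρ1 z₁, ρ2 z₂) = x'' (z₁, z₂) := by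
    intro z₁ z₂ h1 h2 h3 h4
    rcases lt_or_ge z₁ ((τ:ℤ) + T₁) with hc1 | hc1 <;>
      rcases lt_or_ge z₂ (β + T₂) with hc2 | hc2
    · rw [hρ1_fix _ h1 hc1, hρ2_fix _ h3 hc2]
    · rw [hρ1_fix _ h1 hc1, hρ2_wrap _ hc2 (by omega)]
      have h5 := SV z₁ (by omega) (by omega) (z₂ - T₂) (by omega) (by omega)
      rw [show z₂ - T₂ + ((M:ℤ) + g₂) = z₂ by omega] at h5
      exact h5
    · rw [hρ2_fix _ h3 hc2, hρ1_wrap _ hc1 (by omega)]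
      set i := (z₁ - ((τ:ℤ) + T₁)).toNat with hi_def
      have hiv : (i:ℤ) = z₁ - ((τ:ℤ) + T₁) := Int.toNat_of_nonneg (by omega)
      have hir : i < r := by omega
      have h5 := SH i hir z₂ (by omega) (by omega)
      rw [show (τ:ℤ) + i = z₁ - T₁ by omega, show (τ':ℤ) + i = z₁ by omega] at h5
      exact h5
    · rw [hρ1_wrap _ hc1 (by omega), hρ2_wrap _ hc2 (by omega)]
      set i := (z₁ - ((τ:ℤ) + T₁)).toNat with hi_def
      have hiv : (i:ℤ) = z₁ - ((τ:ℤ) + T₁) := Int.toNat_of_nonneg (by omega)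
      have hir : i < r := by omega
      have h5 := SH i hir (z₂ - T₂) (by omega) (by omega)
      rw [show (τ:ℤ) + i = z₁ - T₁ by omega, show (τ':ℤ) + i = z₁ by omega] at h5
      have h6 := SV z₁ (by omega) (by omega) (z₂ - T₂) (by omega) (by omega)
      rw [show z₂ - T₂ + ((M:ℤ) + g₂) = z₂ by omega] at h6
      rw [h5, h6]
  -- the doubly periodic configuration
  set y : Config A := fun v => x'' (ρ1 v.1, ρ2 v.2) with hy_def
  have dagger : ∀ (v : ℤ × ℤ) (i j : ℕ), i < r → j < r →
      y (v.1 + (i:ℤ), v.2 + (j:ℤ)) = x'' (ρ1 v.1 + i, ρ2 v.2 + j) := by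
    intro v i j hi hj
    show x'' (ρ1 (v.1 + i), ρ2 (v.2 + j)) = _
    rw [← hρ1_add v.1 i, ← hρ2_add v.2 j]
    exact key _ _ (by have := hρ1_lb v.1; omega) (by have := hρ1_ub v.1; omega)
      (by have := hρ2_lb v.2; omega) (by have := hρ2_ub v.2; omega)
  have hyX : y ∈ X := by
    rw [hF]
    intro u
    have hblock : blockAt y u rz = blockAt x'' (ρ1 u.1, ρ2 u.2) rz := by
      funext v
      have h1 := dagger u (v.1 : ℕ) (v.2 : ℕ)
        (lt_of_lt_of_le v.1.isLt hrz_r) (lt_of_lt_of_le v.2.isLt hrz_r)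
      simp only [blockAt]
      have e1 : u + (((v.1 : ℕ) : ℤ), ((v.2 : ℕ) : ℤ))
          = (u.1 + ((v.1 : ℕ) : ℤ), u.2 + ((v.2 : ℕ) : ℤ)) := by ext <;> simp
      have e2 : (ρ1 u.1, ρ2 u.2) + (((v.1 : ℕ) : ℤ), ((v.2 : ℕ) : ℤ))
          = (ρ1 u.1 + ((v.1 : ℕ) : ℤ), ρ2 u.2 + ((v.2 : ℕ) : ℤ)) := by ext <;> simp
      rw [e1, e2]
      exact h1
    rw [hblock]
    have h2 := hx''X
    rw [hF] at h2
    exact h2 _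
  have hyDP : DoublyPeriodic y := by
    refine ⟨T₁, hT₁pos, T₂, hT₂pos, ?_, ?_⟩
    · funext v
      show y (v + (T₁, 0)) = y v
      have e1 : (v + (T₁, (0:ℤ))).1 = v.1 + T₁ := rfl
      have e2 : (v + (T₁, (0:ℤ))).2 = v.2 + 0 := rfl
      simp only [hy_def, e1, e2, add_zero]
      rw [hρ1_shift]
    · funext v
      show y (v + (0, T₂)) = y v
      have e1 : (v + ((0:ℤ), T₂)).1 = v.1 + 0 := rfl
      have e2 : (v + ((0:ℤ), T₂)).2 = v.2 + T₂ := rfl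
      simp only [hy_def, e1, e2, add_zero]
      rw [hρ2_shift]
  -- final shift
  refine ⟨shiftC ((τ:ℤ) + L, β + L) y, hshift y hyX _, dp_shiftC hyDP _, ?_⟩
  intro v hv1 hv2
  have hb1 : -(L:ℤ) ≤ v.1 ∧ v.1 ≤ L := by omega
  have hb2 : -(L:ℤ) ≤ v.2 ∧ v.2 ≤ L := by omega
  set i := (v.1 + L).toNat with hi_def
  have hiv : (i:ℤ) = v.1 + L := Int.toNat_of_nonneg (by omega)
  have hiM : i < M := by omega
  set d := (v.2 + L).toNat with hd_def
  have hdv : (d:ℤ) = v.2 + L := Int.toNat_of_nonneg (by omega)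
  have hdM : d < M := by omega
  show y (v + ((τ:ℤ) + L, β + L)) = x v
  have e0 : y (v + ((τ:ℤ) + L, β + L)) = x'' (ρ1 (v.1 + ((τ:ℤ) + L)), ρ2 (v.2 + (β + L))) := rfl
  rw [e0, hρ1_fix _ (by omega) (by omega), hρ2_fix _ (by omega) (by omega)]
  rw [show v.1 + ((τ:ℤ) + L) = (τ:ℤ) + i by omega,
    show v.2 + (β + (L:ℤ)) = (W:ℤ) - M + d by omega]
  rw [bottomCopy τ hτT i d hiM hdM]
  simp only [hP_def]
  rw [show -(L:ℤ) + i = v.1 by omega, show -(L:ℤ) + d = v.2 by omega]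

/-- An `f`-block gluing Z²-SFT with `f(n) ∈ o(log n)` and `f ≤ id` has a dense set of
doubly periodic configurations. -/
theorem stmt1 {A : Type} [Fintype A] [TopologicalSpace A] [DiscreteTopology A]
    (X : Set (Config A)) (hX : IsSFT X)
    (f : ℕ → ℕ) (hf : Monotone f)
    (hlog : ∀ ε : ℝ, 0 < ε → ∃ n₀ : ℕ, ∀ n : ℕ, n₀ ≤ n → (f n : ℝ) ≤ ε * Real.log n)
    (hid : ∀ n : ℕ, f n ≤ n)
    (hbg : BlockGluing X f) :
    X ⊆ closure {y : Config A | y ∈ X ∧ DoublyPeriodic y} := by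
  classical
  obtain ⟨rz, F, hF⟩ := hX
  intro x hx
  rw [mem_closure_iff_nhds]
  intro U hU
  rw [nhds_pi, Filter.mem_pi] at hU
  obtain ⟨I, hIfin, V, hV, hVsub⟩ := hU
  set L : ℕ := hIfin.toFinset.sup (fun v => max v.1.natAbs v.2.natAbs) with hL_def
  obtain ⟨y, hyX, hyDP, hyag⟩ := main_dense X rz F hF f hlog hid hbg x hx L
  refine ⟨y, ?_, hyX, hyDP⟩
  apply hVsub
  intro i hi
  have h1 : i ∈ hIfin.toFinset := hIfin.mem_toFinset.mpr hi
  have h2 := Finset.le_sup (f := fun v : ℤ × ℤ => max v.1.natAbs v.2.natAbs) h1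
  have hiL : i.1.natAbs ≤ L ∧ i.2.natAbs ≤ L :=
    ⟨le_trans (le_max_left _ _) h2, le_trans (le_max_right _ _) h2⟩
  rw [hyag i hiL.1 hiL.2]
  have h3 := hV i
  rw [nhds_discrete] at h3
  exact h3
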